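/- For smooth U : ℝ → ℝⁿ, the difference of interface values satisfies (U(x_i + Δx/2) − U(x_i − Δx/2))/Δx − [ (Δx²/24)(U''(x_{i+1/2}) − U''(x_{i−1/2}))/Δx − (7Δx⁴/5760)(U⁽⁴⁾(x_{i+1/2}) − U⁽⁴⁾(x_{i−1/2}))/Δx ] = U'(x_i) + O(Δx⁶); hence the term −(1/Δx)C(U_i)(Û⁻_{i+1/2} − Û⁺_{i−1/2}) together with the C-weighted boundary-derivative corrections in eqn. (15) approximates −C(U(x_i))∂_x U(x_i) to fifth order. -/

import Mathlib

open Filter Asymptotics Topology Set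

section StabAux
variable {E : Type*} [NormedAddCommGroup E] [NormedSpace ℝ E]

lemma aux_pow_smul (v : E) (m : ℕ) :
    ∀ j : ℕ, iteratedDeriv j (fun h : ℝ => h ^ m • v)
      = fun h : ℝ => ((m.descFactorial j : ℝ) * h ^ (m - j)) • v := by
  intro j
  induction j with
  | zero => simp
  | succ j ih =>
    rw [iteratedDeriv_succ, ih]
    funext h
    rw [deriv_smul_const (by fun_prop)]
    have : deriv (fun h : ℝ => (m.descFactorial j : ℝ) * h ^ (m - j)) h
        = (m.descFactorial j : ℝ) * ((m - j : ℕ) * h ^ (m - j - 1)) := by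
      rw [deriv_const_mul _ (by fun_prop)]
      simp
    rw [this, Nat.descFactorial_succ]
    push_cast
    rw [show m - j - 1 = m - (j + 1) from by omega]
    ring_nf

lemma aux_iD_iD (m j : ℕ) (f : ℝ → E) :
    iteratedDeriv j (iteratedDeriv m f) = iteratedDeriv (m + j) f := by
  simp only [iteratedDeriv_eq_iterate]
  rw [← Function.iterate_add_apply]
  congr 1
  omega

lemma aux_contDiff_iD (k m : ℕ) {f : ℝ → E} (hf : ContDiff ℝ (k + m : ℕ) f) :
    ContDiff ℝ k (iteratedDeriv m f) := by
  rw [iteratedDeriv_eq_iterate]; exact ContDiff.iterate_deriv' k m hf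

lemma aux_iD_sub' {f g : ℝ → E} {j : ℕ} (hf : ContDiff ℝ j f) (hg : ContDiff ℝ j g) (t : ℝ) :
    iteratedDeriv j (fun y => f y - g y) t = iteratedDeriv j f t - iteratedDeriv j g t := by
  simp only [← iteratedDerivWithin_univ]
  exact iteratedDerivWithin_sub (mem_univ t) uniqueDiffOn_univ hf.contDiffWithinAt hg.contDiffWithinAt

lemma aux_iD_add' {f g : ℝ → E} {j : ℕ} (hf : ContDiff ℝ j f) (hg : ContDiff ℝ j g) (t : ℝ) :
    iteratedDeriv j (fun y => f y + g y) t = iteratedDeriv j f t + iteratedDeriv j g t := by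
  simp only [← iteratedDerivWithin_univ]
  exact iteratedDerivWithin_add (mem_univ t) uniqueDiffOn_univ hf.contDiffWithinAt hg.contDiffWithinAt

lemma aux_affine (j : ℕ) {f : ℝ → E} (hf : ContDiff ℝ j f) (x c : ℝ) :
    iteratedDeriv j (fun h : ℝ => f (x + c * h)) 0 = c ^ j • iteratedDeriv j f x := by
  have h1 : ContDiff ℝ j (fun z : ℝ => f (x + z)) := hf.comp (contDiff_const.add contDiff_id)
  have h2 := congrFun (iteratedDeriv_comp_const_smul (n := j) h1 c) 0
  simp only [mul_zero] at h2
  rw [iteratedDeriv_comp_const_add] at h2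
  simpa using h2

lemma aux_mvt {g : ℝ → E} {k : ℕ} (hg : Differentiable ℝ g) (h0 : g 0 = 0)
    (hd : deriv g =O[𝓝 (0:ℝ)] fun h => h ^ k) :
    g =O[𝓝 (0:ℝ)] fun h => h ^ (k + 1) := by
  obtain ⟨C, hC⟩ := hd.isBigOWith
  rw [isBigOWith_iff, Metric.eventually_nhds_iff] at hC
  obtain ⟨δ, hδ, hball⟩ := hC
  have hC0 : ∀ t : ℝ, dist t 0 < δ → ‖deriv g t‖ ≤ max C 0 * ‖t‖ ^ k := by
    intro t ht
    calc ‖deriv g t‖ ≤ C * ‖t ^ k‖ := hball ht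
    _ ≤ max C 0 * ‖t‖ ^ k := by rw [norm_pow]; gcongr; exact le_max_left _ _
  rw [isBigO_iff]
  refine ⟨max C 0, ?_⟩
  rw [Metric.eventually_nhds_iff]
  refine ⟨δ, hδ, fun h hh => ?_⟩
  have key : ‖g h - g 0‖ ≤ (max C 0 * ‖h‖ ^ k) * ‖h - 0‖ := by
    refine Convex.norm_image_sub_le_of_norm_deriv_le (s := Metric.closedBall (0:ℝ) ‖h‖)
      (fun t _ => (hg t)) (fun t ht => ?_) (convex_closedBall _ _) ?_ ?_
    · have h1 : dist t 0 ≤ ‖h‖ := Metric.mem_closedBall.mp ht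
      have h2 : dist t 0 < δ := lt_of_le_of_lt h1 (by simpa [Real.dist_eq] using hh)
      calc ‖deriv g t‖ ≤ max C 0 * ‖t‖ ^ k := hC0 t h2
      _ ≤ max C 0 * ‖h‖ ^ k := by
          refine mul_le_mul_of_nonneg_left ?_ (le_max_right _ _)
          exact pow_le_pow_left₀ (norm_nonneg _) (by simpa [Real.dist_eq] using h1) k
    · simp
    · simp [Metric.mem_closedBall, Real.dist_eq]
  rw [h0, sub_zero, sub_zero] at key
  calc ‖g h‖ ≤ max C 0 * ‖h‖ ^ k * ‖h‖ := key
  _ = max C 0 * ‖h ^ (k + 1)‖ := by rw [norm_pow, pow_succ]; ring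

lemma aux_key :
    ∀ (k : ℕ) {g : ℝ → E}, ContDiff ℝ (k + 1 : ℕ) g →
    (∀ j, j ≤ k → iteratedDeriv j g 0 = 0) → g =O[𝓝 (0:ℝ)] fun h => h ^ (k + 1) := by
  intro k
  induction k with
  | zero =>
    intro g hg hv
    have h0 : g 0 = 0 := by simpa using hv 0 le_rfl
    refine aux_mvt (hg.differentiable (by norm_num)) h0 ?_
    have hcont : Continuous (deriv g) := hg.continuous_deriv (by norm_num)
    have h1 : Tendsto (deriv g) (𝓝 (0:ℝ)) (𝓝 (deriv g 0)) := hcont.continuousAt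
    have h2 := h1.isBigO_one ℝ
    simpa using h2
  | succ k ih =>
    intro g hg hv
    have hg2 : ContDiff ℝ ((k + 1 : ℕ) + 1) g := by exact_mod_cast hg
    have hg' : ContDiff ℝ (k + 1 : ℕ) (deriv g) := (contDiff_succ_iff_deriv.mp hg2).2.2
    have hv' : ∀ j, j ≤ k → iteratedDeriv j (deriv g) 0 = 0 := by
      intro j hj
      rw [← iteratedDeriv_succ']
      exact hv (j + 1) (by omega)
    exact aux_mvt (hg.differentiable (by exact_mod_cast (by omega : k + 1 + 1 ≠ 0)))
      (by simpa using hv 0 (by omega)) (ih hg' hv')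

lemma aux_phi (U : ℝ → E) (hU : ContDiff ℝ 7 U) (x : ℝ) (m j : ℕ) (hmj : m + j ≤ 7) :
    iteratedDeriv j (fun h : ℝ => iteratedDeriv m U (x + h / 2) - iteratedDeriv m U (x - h / 2)) 0
      = (((1:ℝ)/2) ^ j - (-(1/2) : ℝ) ^ j) • iteratedDeriv (m + j) U x := by
  have hUm : ContDiff ℝ j (iteratedDeriv m U) := by
    refine aux_contDiff_iD j m (hU.of_le ?_)
    exact_mod_cast (show ((j + m : ℕ) : ℕ∞) ≤ (7 : ℕ∞) by exact_mod_cast (by omega : j + m ≤ 7))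
  have e1 : ∀ h : ℝ, x + h / 2 = x + (1/2 : ℝ) * h := fun h => by ring
  have e2 : ∀ h : ℝ, x - h / 2 = x + (-(1/2) : ℝ) * h := fun h => by ring
  simp only [e1, e2]
  have hc1 : ContDiff ℝ j (fun h : ℝ => iteratedDeriv m U (x + (1/2 : ℝ) * h)) :=
    hUm.comp (by fun_prop)
  have hc2 : ContDiff ℝ j (fun h : ℝ => iteratedDeriv m U (x + (-(1/2) : ℝ) * h)) :=
    hUm.comp (by fun_prop)
  rw [aux_iD_sub' hc1 hc2, aux_affine j hUm x (1/2), aux_affine j hUm x (-(1/2)),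
    aux_iD_iD, sub_smul]

lemma aux_cd_comp (k m : ℕ) {U : ℝ → E} (hU : ContDiff ℝ 7 U) (hkm : k + m ≤ 7) (x c d : ℝ) :
    ContDiff ℝ k (fun h : ℝ => iteratedDeriv m U (x + c * h + d)) := by
  have hUm : ContDiff ℝ k (iteratedDeriv m U) := by
    refine aux_contDiff_iD k m (hU.of_le ?_)
    exact_mod_cast (show ((k + m : ℕ) : ℕ∞) ≤ (7 : ℕ∞) by exact_mod_cast hkm)
  exact hUm.comp (by fun_prop)

lemma aux_piece (U : ℝ → E) (hU : ContDiff ℝ 7 U) (x : ℝ) (m k : ℕ) (hmk : m + k + 1 ≤ 7)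
    (P : ℝ → E) (hP : ContDiff ℝ (k+1 : ℕ) P)
    (hPv : ∀ j, j ≤ k → iteratedDeriv j P 0
        = (((1:ℝ)/2) ^ j - (-(1/2) : ℝ) ^ j) • iteratedDeriv (m + j) U x) :
    (fun h : ℝ => (iteratedDeriv m U (x + h / 2) - iteratedDeriv m U (x - h / 2)) - P h)
      =O[𝓝 (0:ℝ)] fun h : ℝ => h ^ (k + 1) := by
  have e1 : ∀ h : ℝ, x + h / 2 = x + (1/2 : ℝ) * h + 0 := fun h => by ring
  have e2 : ∀ h : ℝ, x - h / 2 = x + (-(1/2) : ℝ) * h + 0 := fun h => by ring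
  have hc1 : ContDiff ℝ (k+1 : ℕ) (fun h : ℝ => iteratedDeriv m U (x + h / 2)) := by
    simp only [e1]; exact aux_cd_comp (k+1) m hU (by omega) x (1/2) 0
  have hc2 : ContDiff ℝ (k+1 : ℕ) (fun h : ℝ => iteratedDeriv m U (x - h / 2)) := by
    simp only [e2]; exact aux_cd_comp (k+1) m hU (by omega) x (-(1/2)) 0
  refine aux_key k ((hc1.sub hc2).sub hP) ?_
  intro j hj
  have hphi : ContDiff ℝ (j : ℕ) (fun h : ℝ =>
      iteratedDeriv m U (x + h / 2) - iteratedDeriv m U (x - h / 2)) := by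
    refine ContDiff.sub (hc1.of_le ?_) (hc2.of_le ?_) <;>
      exact_mod_cast (show ((j:ℕ) : ℕ∞) ≤ ((k+1 : ℕ) : ℕ∞) by exact_mod_cast (by omega : j ≤ k+1))
  rw [aux_iD_sub' hphi (hP.of_le (by
      exact_mod_cast (show ((j:ℕ) : ℕ∞) ≤ ((k+1 : ℕ) : ℕ∞)
        by exact_mod_cast (by omega : j ≤ k+1)))) 0,
    aux_phi U hU x m j (by omega), hPv j hj, sub_self]

set_option linter.unnecessarySeqFocus false in
lemma aux_main (U : ℝ → E) (hU : ContDiff ℝ 7 U) (x : ℝ) :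
    (fun h : ℝ => (U (x + h / 2) - U (x - h / 2))
        - (h ^ 2 / 24) • (iteratedDeriv 2 U (x + h / 2) - iteratedDeriv 2 U (x - h / 2))
        + (7 * h ^ 4 / 5760) • (iteratedDeriv 4 U (x + h / 2) - iteratedDeriv 4 U (x - h / 2))
        - h • deriv U x) =O[𝓝 (0:ℝ)] fun h : ℝ => h ^ 7 := by
  set v1 := iteratedDeriv 1 U x with hv1
  set v3 := iteratedDeriv 3 U x with hv3
  set v5 := iteratedDeriv 5 U x with hv5
  have hA : (fun h : ℝ => (iteratedDeriv 0 U (x + h / 2) - iteratedDeriv 0 U (x - h / 2))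
      - (h ^ 1 • v1 + (h ^ 3 • ((1/24 : ℝ) • v3) + h ^ 5 • ((1/1920 : ℝ) • v5))))
      =O[𝓝 (0:ℝ)] fun h : ℝ => h ^ 7 := by
    refine aux_piece U hU x 0 6 (by omega) _ (by fun_prop) ?_
    intro j hj
    have c1 : ContDiff ℝ (j : ℕ) (fun h : ℝ => h ^ 1 • v1) := by fun_prop
    have c3 : ContDiff ℝ (j : ℕ) (fun h : ℝ => h ^ 3 • ((1/24 : ℝ) • v3)) := by fun_prop
    have c5 : ContDiff ℝ (j : ℕ) (fun h : ℝ => h ^ 5 • ((1/1920 : ℝ) • v5)) := by fun_prop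
    rw [aux_iD_add' c1 (c3.add c5) 0, aux_iD_add' c3 c5 0]
    simp only [aux_pow_smul]
    interval_cases j <;>
      simp [hv1, hv3, hv5, Nat.descFactorial] <;>
      module
  have hB : (fun h : ℝ => (iteratedDeriv 2 U (x + h / 2) - iteratedDeriv 2 U (x - h / 2))
      - (h ^ 1 • v3 + h ^ 3 • ((1/24 : ℝ) • v5)))
      =O[𝓝 (0:ℝ)] fun h : ℝ => h ^ 5 := by
    refine aux_piece U hU x 2 4 (by omega) _ (by fun_prop) ?_
    intro j hj
    have c1 : ContDiff ℝ (j : ℕ) (fun h : ℝ => h ^ 1 • v3) := by fun_prop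
    have c3 : ContDiff ℝ (j : ℕ) (fun h : ℝ => h ^ 3 • ((1/24 : ℝ) • v5)) := by fun_prop
    rw [aux_iD_add' c1 c3 0]
    simp only [aux_pow_smul]
    interval_cases j <;>
      simp [hv3, hv5, Nat.descFactorial] <;>
      module
  have hD : (fun h : ℝ => (iteratedDeriv 4 U (x + h / 2) - iteratedDeriv 4 U (x - h / 2))
      - h ^ 1 • v5)
      =O[𝓝 (0:ℝ)] fun h : ℝ => h ^ 3 := by
    refine aux_piece U hU x 4 2 (by omega) _ (by fun_prop) ?_
    intro j hj
    simp only [aux_pow_smul]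
    interval_cases j <;>
      simp [hv5, Nat.descFactorial] <;>
      module
  have hB' : (fun h : ℝ => (h ^ 2 / 24) •
      ((iteratedDeriv 2 U (x + h / 2) - iteratedDeriv 2 U (x - h / 2))
        - (h ^ 1 • v3 + h ^ 3 • ((1/24 : ℝ) • v5))))
      =O[𝓝 (0:ℝ)] fun h : ℝ => h ^ 7 := by
    have hs : (fun h : ℝ => h ^ 2 / 24) =O[𝓝 (0:ℝ)] fun h : ℝ => h ^ 2 := by
      refine (isBigO_refl (fun h : ℝ => h ^ 2) _).const_mul_left (1/24) |>.congr' ?_ (by rfl)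
      filter_upwards with h; ring
    have := hs.smul hB
    refine this.congr' (by rfl) ?_
    filter_upwards with h
    simp [pow_succ]; ring
  have hD' : (fun h : ℝ => (7 * h ^ 4 / 5760) •
      ((iteratedDeriv 4 U (x + h / 2) - iteratedDeriv 4 U (x - h / 2)) - h ^ 1 • v5))
      =O[𝓝 (0:ℝ)] fun h : ℝ => h ^ 7 := by
    have hs : (fun h : ℝ => 7 * h ^ 4 / 5760) =O[𝓝 (0:ℝ)] fun h : ℝ => h ^ 4 := by
      refine (isBigO_refl (fun h : ℝ => h ^ 4) _).const_mul_left (7/5760) |>.congr' ?_ (by rfl)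
      filter_upwards with h; ring
    have := hs.smul hD
    refine this.congr' (by rfl) ?_
    filter_upwards with h
    simp [pow_succ]; ring
  have hsum := (hA.sub hB').add hD'
  refine hsum.congr' ?_ (by rfl)
  filter_upwards with h
  have h1 : deriv U x = v1 := by rw [hv1, iteratedDeriv_one]
  simp only [iteratedDeriv_zero, h1]
  module

end StabAux

/-- For smooth `U : ℝ → ℝⁿ`, the centered half-grid difference corrected by
`−(Δx²/24)` times the boundary second-derivative difference and `+(7Δx⁴/5760)` times the
boundary fourth-derivative difference equals `U'(x_i) + O(Δx⁶)`; hence applying the fixed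
matrix `C` gives a fifth-order accurate approximation of `C(U_i) ∂_x U (x_i)`. -/
theorem stmt15 (n : ℕ) (U : ℝ → (Fin n → ℝ)) (hU : ContDiff ℝ 7 U)
    (Cmat : Matrix (Fin n) (Fin n) ℝ) (x : ℝ) :
    ((fun h : ℝ =>
        (1 / h) • (U (x + h / 2) - U (x - h / 2))
          - ((h ^ 2 / 24) • ((1 / h) • (iteratedDeriv 2 U (x + h / 2)
                - iteratedDeriv 2 U (x - h / 2)))
            - (7 * h ^ 4 / 5760) • ((1 / h) • (iteratedDeriv 4 U (x + h / 2)
                - iteratedDeriv 4 U (x - h / 2))))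
          - deriv U x)
      =O[𝓝[>] (0 : ℝ)] (fun h : ℝ => h ^ 6)) ∧
    ((fun h : ℝ =>
        Cmat.mulVec ((1 / h) • (U (x + h / 2) - U (x - h / 2))
          - ((h ^ 2 / 24) • ((1 / h) • (iteratedDeriv 2 U (x + h / 2)
                - iteratedDeriv 2 U (x - h / 2)))
            - (7 * h ^ 4 / 5760) • ((1 / h) • (iteratedDeriv 4 U (x + h / 2)
                - iteratedDeriv 4 U (x - h / 2)))))
          - Cmat.mulVec (deriv U x))
      =O[𝓝[>] (0 : ℝ)] (fun h : ℝ => h ^ 6)) := by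
  have hmain := (aux_main U hU x).mono (nhdsWithin_le_nhds (s := Ioi (0:ℝ)))
  have hG := (isBigO_refl (fun h : ℝ => (1:ℝ)/h) (𝓝[>] (0:ℝ))).smul hmain
  have key1 : (fun h : ℝ =>
        (1 / h) • (U (x + h / 2) - U (x - h / 2))
          - ((h ^ 2 / 24) • ((1 / h) • (iteratedDeriv 2 U (x + h / 2)
                - iteratedDeriv 2 U (x - h / 2)))
            - (7 * h ^ 4 / 5760) • ((1 / h) • (iteratedDeriv 4 U (x + h / 2)
                - iteratedDeriv 4 U (x - h / 2))))
          - deriv U x)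
      =O[𝓝[>] (0 : ℝ)] (fun h : ℝ => h ^ 6) := by
    refine hG.congr' ?_ ?_
    · filter_upwards [self_mem_nhdsWithin] with h hh
      have hne : h ≠ 0 := ne_of_gt (mem_Ioi.mp hh)
      match_scalars <;> (field_simp; try ring)
    · filter_upwards [self_mem_nhdsWithin] with h hh
      have hne : h ≠ 0 := ne_of_gt (mem_Ioi.mp hh)
      simp only [smul_eq_mul, one_div]
      field_simp
  refine ⟨key1, ?_⟩
  have hcomp := ((Matrix.mulVecLin Cmat).toContinuousLinearMap).isBigO_comp
      (fun h : ℝ =>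
        (1 / h) • (U (x + h / 2) - U (x - h / 2))
          - ((h ^ 2 / 24) • ((1 / h) • (iteratedDeriv 2 U (x + h / 2)
                - iteratedDeriv 2 U (x - h / 2)))
            - (7 * h ^ 4 / 5760) • ((1 / h) • (iteratedDeriv 4 U (x + h / 2)
                - iteratedDeriv 4 U (x - h / 2))))
          - deriv U x) (𝓝[>] (0:ℝ))
  refine (hcomp.trans key1).congr' ?_ (by rfl)
  filter_upwards with h
  simp [LinearMap.coe_toContinuousLinearMap', map_sub, Matrix.mulVecLin_apply,
    Matrix.mulVec_sub, Matrix.mulVec_smul]
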